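/- Suppose v: ℝ → ℝⁿ satisfies the two-step recurrence v^{n+1} = 2vⁿ - v^{n-1} + Δt² M vⁿ for a symmetric matrix M with eigenvalues in [-4/Δt², 0] (i.e., -Δt² M has spectral radius at most 4 and M is negative semi-definite). Then the discrete quantity Eⁿ = ((v^{n+1} - vⁿ)/Δt)ᵀ((v^{n+1} - vⁿ)/Δt) - (vⁿ)ᵀ M v^{n+1} is independent of n. -/

import Mathlib

open Matrix

theorem stmt_14 (n : ℕ) (M : Matrix (Fin n) (Fin n) ℝ) (hM : M.IsSymm)
    (Δt : ℝ) (hΔt : 0 < Δt)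
    (hneg : (-M).PosSemidef)
    (hspec : ((4/Δt^2 : ℝ) • (1 : Matrix (Fin n) (Fin n) ℝ) + M).PosSemidef)
    (v : ℕ → Fin n → ℝ)
    (hrec : ∀ k : ℕ, v (k+2) = 2 • v (k+1) - v k + Δt^2 • M.mulVec (v (k+1)))
    (E : ℕ → ℝ)
    (hE : ∀ k : ℕ, E k = (Δt⁻¹ • (v (k+1) - v k)) ⬝ᵥ (Δt⁻¹ • (v (k+1) - v k)) -
      v k ⬝ᵥ M.mulVec (v (k+1))) :
    ∀ k l : ℕ, E k = E l := by
  have hΔ : (Δt : ℝ) ≠ 0 := ne_of_gt hΔt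
  have key : ∀ x y : Fin n → ℝ, x ⬝ᵥ M.mulVec y = y ⬝ᵥ M.mulVec x := by
    intro x y
    rw [dotProduct_mulVec, ← Matrix.mulVec_transpose, hM.eq, dotProduct_comm]
  have step : ∀ k : ℕ, E (k + 1) = E k := by
    intro k
    rw [hE, hE, hrec k]
    set a := v k
    set b := v (k + 1)
    have c0 : M.mulVec b ⬝ᵥ b = b ⬝ᵥ M.mulVec b := dotProduct_comm _ _
    have c1 : M.mulVec b ⬝ᵥ a = a ⬝ᵥ M.mulVec b := dotProduct_comm _ _
    have h1 : a ⬝ᵥ M.mulVec (M.mulVec b) = M.mulVec b ⬝ᵥ M.mulVec a := key a (M.mulVec b)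
    have h2 : b ⬝ᵥ M.mulVec a = a ⬝ᵥ M.mulVec b := key b a
    have h3 : b ⬝ᵥ (M * M).mulVec b = M.mulVec b ⬝ᵥ M.mulVec b := by
      rw [← Matrix.mulVec_mulVec]; exact key b (M.mulVec b)
    simp only [smul_sub, smul_smul, two_smul, mulVec_add, mulVec_sub, mulVec_smul,
      dotProduct_add, dotProduct_sub, add_dotProduct, sub_dotProduct, smul_dotProduct,
      dotProduct_smul, smul_eq_mul]
    field_simp
    ring_nf
    linear_combination Δt^2*c0 - Δt^2*c1 + Δt^2*h2 - Δt^4*h3 - Δt^4*(congrArg (b ⬝ᵥ ·) (Matrix.mulVec_mulVec b M M))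
  intro k l
  have all0 : ∀ m : ℕ, E m = E 0 := by
    intro m
    induction m with
    | zero => rfl
    | succ m ih => rw [step m, ih]
  rw [all0 k, all0 l]
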